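/- For permutations π, σ of {1,...,n}, the function Q_π + Q_σ is bent (resp. near-bent) if and only if Q_{I_n} + Q_{σ^{-1}∘π} is bent (resp. near-bent). -/
import Mathlib


open Finset

/-- Walsh–Hadamard transform (integer-valued) of a Boolean function over an
arbitrary finite index type. -/
def walshOn {ι : Type*} [Fintype ι] [DecidableEq ι]
    (f : (ι → ZMod 2) → ZMod 2) (c : ι → ZMod 2) : ℤ :=
  ∑ x : ι → ZMod 2, (-1 : ℤ) ^ ((f x + ∑ k, c k * x k).val)

/-- The quadratic function `Q_π(x) = ∑_{i=1}^{n-1} x_{π(i)} x_{π(i+1)}`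
(0-indexed). -/
def Qperm (n : ℕ) (π : Equiv.Perm (Fin n)) (x : Fin n → ZMod 2) : ZMod 2 :=
  ∑ i : Fin n, if h : (i : ℕ) + 1 < n then x (π i) * x (π ⟨(i : ℕ) + 1, h⟩) else 0

/-- A Boolean function on `𝔽₂ⁿ` is bent if its Walsh spectrum is `{±2^(n/2)}`. -/
def IsBent (n : ℕ) (f : (Fin n → ZMod 2) → ZMod 2) : Prop :=
  ∀ c, walshOn f c = 2 ^ (n / 2) ∨ walshOn f c = -2 ^ (n / 2)

/-- A Boolean function on `𝔽₂ⁿ` is near-bent if its Walsh spectrum is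
`{0, ±2^((n+1)/2)}`. -/
def IsNearBent (n : ℕ) (f : (Fin n → ZMod 2) → ZMod 2) : Prop :=
  ∀ c, walshOn f c = 0 ∨ walshOn f c = 2 ^ ((n + 1) / 2) ∨
    walshOn f c = -(2 ^ ((n + 1) / 2))

/-- The reverse of a permutation: `π̃(i) = π(n+1-i)` (1-indexed). -/
def reversePerm (n : ℕ) (π : Equiv.Perm (Fin n)) : Equiv.Perm (Fin n) :=
  Fin.revPerm.trans π

lemma Qperm_comp (n : ℕ) (σ τ : Equiv.Perm (Fin n)) (x : Fin n → ZMod 2) :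
    Qperm n τ (fun j => x (σ⁻¹ j)) = Qperm n (σ⁻¹ * τ) x := by
  unfold Qperm
  refine Finset.sum_congr rfl fun i _ => ?_
  simp [Equiv.Perm.mul_apply]

lemma walsh_precomp (n : ℕ) (σ : Equiv.Perm (Fin n))
    (f : (Fin n → ZMod 2) → ZMod 2) (c : Fin n → ZMod 2) :
    walshOn (fun x => f (fun j => x (σ⁻¹ j))) c = walshOn f (fun m => c (σ⁻¹ m)) := by
  unfold walshOn
  refine Fintype.sum_equiv (Equiv.arrowCongr σ (Equiv.refl (ZMod 2))) _ _ fun x => ?_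
  have h1 : (fun j => x (σ⁻¹ j)) = Equiv.arrowCongr σ (Equiv.refl (ZMod 2)) x := by
    funext j; simp [Equiv.arrowCongr, Equiv.Perm.inv_def]
  have h2 : (∑ m, c (σ⁻¹ m) * (Equiv.arrowCongr σ (Equiv.refl (ZMod 2)) x) m)
      = ∑ k, c k * x k := by
    rw [← Equiv.sum_comp σ⁻¹ (fun k => c k * x k)]
    refine Finset.sum_congr rfl fun m _ => ?_
    simp [Equiv.arrowCongr, Equiv.Perm.inv_def]
  simp only [h1, h2]

theorem bent_iff_comp_inverse (n : ℕ) (π σ : Equiv.Perm (Fin n)) :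
    (IsBent n (fun x => Qperm n π x + Qperm n σ x) ↔
      IsBent n (fun x => Qperm n 1 x + Qperm n (σ⁻¹ * π) x)) ∧
    (IsNearBent n (fun x => Qperm n π x + Qperm n σ x) ↔
      IsNearBent n (fun x => Qperm n 1 x + Qperm n (σ⁻¹ * π) x)) := by
  set f : (Fin n → ZMod 2) → ZMod 2 := fun x => Qperm n π x + Qperm n σ x with hf
  have hfun : (fun x => Qperm n 1 x + Qperm n (σ⁻¹ * π) x)
      = fun x => f (fun j => x (σ⁻¹ j)) := by
    funext x
    simp only [hf, Qperm_comp, inv_mul_cancel]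
    exact add_comm _ _
  have hw : ∀ c, walshOn (fun x => Qperm n 1 x + Qperm n (σ⁻¹ * π) x) c
      = walshOn f (fun m => c (σ⁻¹ m)) := by
    intro c; rw [hfun, walsh_precomp]
  have hw' : ∀ c, walshOn f c
      = walshOn (fun x => Qperm n 1 x + Qperm n (σ⁻¹ * π) x) (fun m => c (σ m)) := by
    intro c; rw [hw]; congr 1; funext m; simp
  constructor
  · constructor
    · intro h c; rw [hw]; exact h _
    · intro h c; rw [hw']; exact h _
  · constructor
    · intro h c; rw [hw]; exact h _
    · intro h c; rw [hw']; exact h _
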